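/- arXiv:0903.3774 — 2 statements merged into one kernel-verified Lean document; each statement's English description precedes it below -/
import Mathlib

section
/- The holomorphic automorphism F of ℂ^{n+1} defined by F(z,w) = (z_1,…,z_m, e^w z_{m+1},…, e^w z_n, w) maps the hypersurface 𝒬 = {Σ_{j=1}^m |z_j|² + |w|² = 1} bijectively onto itself, but F does not extend continuously (hence not holomorphically) to an automorphism of ℂP^{n+1}. -/
open scoped LinearAlgebra.Projectivization
open Complex

noncomputable def Fmap (n m : ℕ) : (Fin n → ℂ) × ℂ → (Fin n → ℂ) × ℂ :=
  fun p => (fun j => if (j : ℕ) < m then p.1 j else Complex.exp p.2 * p.1 j, p.2)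

noncomputable def Gmap (n m : ℕ) : (Fin n → ℂ) × ℂ → (Fin n → ℂ) × ℂ :=
  fun p => (fun j => if (j : ℕ) < m then p.1 j else Complex.exp (-p.2) * p.1 j, p.2)

lemma FG (n m : ℕ) (p : (Fin n → ℂ) × ℂ) : Fmap n m (Gmap n m p) = p := by
  unfold Fmap Gmap
  refine Prod.ext ?_ rfl
  funext j
  by_cases h : (j : ℕ) < m <;> simp [h, ← mul_assoc, ← Complex.exp_add]

lemma GF (n m : ℕ) (p : (Fin n → ℂ) × ℂ) : Gmap n m (Fmap n m p) = p := by
  unfold Fmap Gmap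
  refine Prod.ext ?_ rfl
  funext j
  by_cases h : (j : ℕ) < m <;> simp [h, ← mul_assoc, ← Complex.exp_add]

lemma key (n m : ℕ) (p : (Fin n → ℂ) × ℂ) :
    ((∑ j : Fin n, if (j : ℕ) < m then ‖(Fmap n m p).1 j‖ ^ 2 else 0)
      + ‖(Fmap n m p).2‖ ^ 2)
    = (∑ j : Fin n, if (j : ℕ) < m then ‖p.1 j‖ ^ 2 else 0) + ‖p.2‖ ^ 2 := by
  congr 1
  apply Finset.sum_congr rfl
  intro j _
  by_cases h : (j : ℕ) < m <;> simp [Fmap, h]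

/-- `F` is a holomorphic automorphism of `ℂ^{n+1}` mapping the hypersurface
`𝒬 = {∑_{j≤m}|z_j|² + |w|² = 1}` bijectively onto itself, but `F` is not the restriction
of any projective linear transformation of `ℂP^{n+1}` (so it does not extend to an
automorphism of `ℂP^{n+1}`). -/
theorem stmt5 (n m : ℕ) (hm : m < n) :
    Differentiable ℂ (Fmap n m) ∧
    Function.Bijective (Fmap n m) ∧
    Fmap n m ''
        {p : (Fin n → ℂ) × ℂ |
          (∑ j : Fin n, if (j : ℕ) < m then ‖p.1 j‖ ^ 2 else 0) + ‖p.2‖ ^ 2 = 1}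
      = {p : (Fin n → ℂ) × ℂ |
          (∑ j : Fin n, if (j : ℕ) < m then ‖p.1 j‖ ^ 2 else 0) + ‖p.2‖ ^ 2 = 1} ∧
    ¬ ∃ Φ : (ℂ × (Fin n → ℂ) × ℂ) ≃ₗ[ℂ] (ℂ × (Fin n → ℂ) × ℂ),
        ∀ (z : Fin n → ℂ) (w : ℂ),
          Projectivization.map Φ.toLinearMap Φ.injective
              (Projectivization.mk ℂ ((1 : ℂ), z, w) (by simp))
            = Projectivization.mk ℂ
                ((1 : ℂ), (Fmap n m (z, w)).1, (Fmap n m (z, w)).2) (by simp) := by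
  refine ⟨?_, ?_, ?_, ?_⟩
  · -- differentiable
    apply Differentiable.prodMk
    · rw [differentiable_pi]
      intro j
      by_cases h : (j : ℕ) < m
      · simp only [Fmap, h, if_true]
        fun_prop
      · simp only [Fmap, h, if_false]
        fun_prop
    · exact differentiable_snd
  · exact Function.bijective_iff_has_inverse.mpr ⟨Gmap n m, GF n m, FG n m⟩
  · ext q
    simp only [Set.mem_image, Set.mem_setOf_eq]
    constructor
    · rintro ⟨p, hp, rfl⟩
      rw [key]; exact hp
    · intro hq
      refine ⟨Gmap n m q, ?_, FG n m q⟩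
      have := key n m (Gmap n m q)
      rw [FG] at this
      rw [← this]; exact hq
  · rintro ⟨Φ, hΦ⟩
    set i : Fin n := ⟨m, hm⟩
    set z : Fin n → ℂ := Pi.single i 1 with hz
    have habc : ∀ w : ℂ,
        ((Φ ((1:ℂ), z, 0)).1 + w * (Φ ((0:ℂ), 0, 1)).1 ≠ 0) ∧
        ((Φ ((1:ℂ), z, 0)).1 + w * (Φ ((0:ℂ), 0, 1)).1) * Complex.exp w
          = (Φ ((1:ℂ), z, 0)).2.1 i + w * (Φ ((0:ℂ), 0, 1)).2.1 i := by
      intro w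
      have h := hΦ z w
      rw [Projectivization.map_mk, Projectivization.mk_eq_mk_iff] at h
      obtain ⟨a, ha⟩ := h
      have hdecomp : ((1:ℂ), z, w) = ((1:ℂ), z, 0) + w • ((0:ℂ), 0, 1) := by
        simp [Prod.ext_iff]
      have hΦv : Φ ((1:ℂ), z, w) = Φ ((1:ℂ), z, 0) + w • Φ ((0:ℂ), 0, 1) := by
        rw [hdecomp, map_add, map_smul]
      have h1 : (a : ℂ) * 1 = (Φ ((1:ℂ), z, w)).1 := congrArg Prod.fst ha
      have h2 : (a : ℂ) * (Fmap n m (z, w)).1 i = (Φ ((1:ℂ), z, w)).2.1 i := by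
        have := congrArg (fun p => p.2.1 i) ha
        simpa [Units.smul_def] using this
      have hFi : (Fmap n m (z, w)).1 i = Complex.exp w := by
        simp [Fmap, hz, i]
      rw [hFi] at h2
      rw [hΦv] at h1 h2
      simp only [Prod.fst_add, Prod.smul_fst, Prod.snd_add, Prod.smul_snd,
        Pi.add_apply, Pi.smul_apply, smul_eq_mul, mul_one] at h1 h2
      constructor
      · rw [← h1]; exact a.ne_zero
      · rw [← h1]; exact h2
    set A := (Φ ((1:ℂ), z, 0)).1
    set B := (Φ ((0:ℂ), 0, 1)).1
    set C := (Φ ((1:ℂ), z, 0)).2.1 i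
    set D := (Φ ((0:ℂ), 0, 1)).2.1 i
    obtain ⟨-, h0⟩ := habc 0
    obtain ⟨-, hπ⟩ := habc (2 * (Real.pi : ℂ) * Complex.I)
    obtain ⟨h1ne, h1⟩ := habc 1
    simp only [Complex.exp_zero, zero_mul, mul_one, add_zero] at h0
    rw [Complex.exp_two_pi_mul_I, mul_one] at hπ
    have hBD : B = D := by
      apply mul_left_cancel₀ Complex.two_pi_I_ne_zero
      linear_combination hπ - h0
    have hexp1 : Complex.exp 1 ≠ 1 := by
      have hgt : (1 : ℝ) < Real.exp 1 := by nlinarith [Real.exp_one_gt_d9]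
      intro h
      have h' : Complex.exp ((1:ℝ) : ℂ) = ((1:ℝ) : ℂ) := by push_cast; exact h
      rw [← Complex.ofReal_exp] at h'
      exact absurd (Complex.ofReal_injective h') (ne_of_gt hgt)
    apply h1ne
    have hz0 : (A + 1 * B) * (Complex.exp 1 - 1) = 0 := by
      linear_combination h1 - h0 - hBD
    rcases mul_eq_zero.mp hz0 with h | h
    · exact h
    · exact absurd (sub_eq_zero.mp h) hexp1
end

section
/- The map f : 𝒬̄ → 𝒬̄ that fixes every point of 𝒮 = 𝒬̄ ∩ {ζ = 0} and equals F(z,w) = (z_1,…,z_m, e^w z_{m+1},…, e^w z_n, w) on the affine part 𝒬 = 𝒬̄ ∩ {ζ ≠ 0} is continuous on all of 𝒬̄. -/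
open scoped LinearAlgebra.Projectivization
open Complex

noncomputable instance {V : Type*} [AddCommGroup V] [Module ℂ V] [TopologicalSpace V] :
    TopologicalSpace (ℙ ℂ V) := instTopologicalSpaceQuotient

/-- `𝒬̄ = {(ζ:𝐳:𝐰) : |ζ|² − |𝐰|² = ∑_{j≤m}|𝐳_j|²} ⊆ ℂP^{n+1}`. -/
def Qbar (n m : ℕ) : Set (ℙ ℂ (ℂ × (Fin n → ℂ) × ℂ)) :=
  {p | ∃ (ζ : ℂ) (z : Fin n → ℂ) (w : ℂ) (h : (ζ, z, w) ≠ 0),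
    p = Projectivization.mk ℂ (ζ, z, w) h ∧
    ‖ζ‖ ^ 2 - ‖w‖ ^ 2 = ∑ j : Fin n, if (j : ℕ) < m then ‖z j‖ ^ 2 else 0}

/-- `𝒮 = 𝒬̄ ∩ {ζ = 0}`. -/
def Sset (n m : ℕ) : Set (ℙ ℂ (ℂ × (Fin n → ℂ) × ℂ)) :=
  Qbar n m ∩ {p | ∃ (z : Fin n → ℂ) (w : ℂ) (h : ((0 : ℂ), z, w) ≠ 0),
    p = Projectivization.mk ℂ ((0 : ℂ), z, w) h}

namespace Stmt7Aux

variable (n m : ℕ)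

abbrev V (n : ℕ) := ℂ × (Fin n → ℂ) × ℂ

/-- The affine cone over `Qbar`. -/
def cone : Set (V n) :=
  {v | ‖v.1‖ ^ 2 - ‖v.2.2‖ ^ 2 = ∑ j : Fin n, if (j : ℕ) < m then ‖v.2.1 j‖ ^ 2 else 0}

/-- Homogeneous lift of the map `F`. -/
noncomputable def Ft : V n → V n := fun v =>
  (v.1, fun j => if (j : ℕ) < m then v.2.1 j
    else (if v.1 = 0 then 1 else Complex.exp (v.2.2 / v.1)) * v.2.1 j, v.2.2)

/-- The rescaling factor `e^{-w/ζ}`. -/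
noncomputable def ee : V n → ℂ := fun v =>
  if v.1 = 0 then 1 else Complex.exp (-(v.2.2 / v.1))

/-- The rescaled lift `Gt = ee • Ft`. -/
noncomputable def Gt : V n → V n := fun v =>
  (ee n v * v.1, fun j => if (j : ℕ) < m then ee n v * v.2.1 j else v.2.1 j,
    ee n v * v.2.2)

lemma ee_ne_zero (v : V n) : ee n v ≠ 0 := by
  unfold ee; split
  · exact one_ne_zero
  · exact Complex.exp_ne_zero _

lemma factor_ne_zero (v : V n) : (if v.1 = 0 then 1 else Complex.exp (v.2.2 / v.1)) ≠ 0 := by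
  split
  · exact one_ne_zero
  · exact Complex.exp_ne_zero _

lemma Gt_eq_smul (v : V n) : Gt n m v = ee n v • Ft n m v := by
  unfold Gt Ft
  rw [Prod.smul_mk, Prod.smul_mk]
  refine Prod.ext rfl (Prod.ext ?_ rfl)
  funext j
  simp only [Pi.smul_apply, smul_eq_mul]
  by_cases hj : (j : ℕ) < m
  · simp [hj]
  · simp only [hj, if_false]
    by_cases h0 : v.1 = 0
    · simp [ee, h0]
    · simp only [ee, h0, if_false]
      rw [← mul_assoc, ← Complex.exp_add, neg_add_cancel, Complex.exp_zero, one_mul]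

lemma Ft_ne_zero {v : V n} (hv : v ≠ 0) : Ft n m v ≠ 0 := by
  intro h
  apply hv
  have h1 : v.1 = 0 := congrArg Prod.fst h
  have h3 : v.2.2 = 0 := congrArg (fun x => x.2.2) h
  have h2 : ∀ j, v.2.1 j = 0 := by
    intro j
    have := congrFun (congrArg (fun x : V n => x.2.1) h) j
    simp only [Ft] at this
    by_cases hj : (j : ℕ) < m
    · simpa [hj] using this
    · simp only [hj, if_false] at this
      rcases mul_eq_zero.1 this with h | h
      · exact absurd h (factor_ne_zero n v)
      · exact h
  exact Prod.ext h1 (Prod.ext (funext h2) h3)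

lemma Gt_ne_zero {v : V n} (hv : v ≠ 0) : Gt n m v ≠ 0 := by
  rw [Gt_eq_smul]
  exact smul_ne_zero (ee_ne_zero n v) (Ft_ne_zero n m hv)

lemma Ft_smul (c : ℂ) (hc : c ≠ 0) (v : V n) : Ft n m (c • v) = c • Ft n m v := by
  obtain ⟨ζ, z, w⟩ := v
  unfold Ft
  simp only [Prod.smul_mk, smul_eq_mul]
  refine Prod.ext rfl (Prod.ext ?_ rfl)
  funext j
  simp only [Pi.smul_apply, smul_eq_mul]
  by_cases hj : (j : ℕ) < m
  · simp [hj]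
  · simp only [hj, if_false]
    by_cases h0 : ζ = 0
    · simp [h0, hc]
    · have hne : c * ζ ≠ 0 := mul_ne_zero hc h0
      rw [if_neg hne, if_neg h0, mul_div_mul_left _ _ hc]
      ring

lemma cone_smul (c : ℂ) {v : V n} (hv : v ∈ cone n m) : c • v ∈ cone n m := by
  simp only [cone, Set.mem_setOf_eq] at hv ⊢
  have h1 : (c • v).1 = c * v.1 := rfl
  have h2 : ∀ j, (c • v).2.1 j = c * v.2.1 j := fun _ => rfl
  have h3 : (c • v).2.2 = c * v.2.2 := rfl
  simp only [h1, h3, norm_mul, mul_pow]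
  calc ‖c‖ ^ 2 * ‖v.1‖ ^ 2 - ‖c‖ ^ 2 * ‖v.2.2‖ ^ 2
      = ‖c‖ ^ 2 * (‖v.1‖ ^ 2 - ‖v.2.2‖ ^ 2) := by ring
    _ = ∑ j : Fin n, if (j : ℕ) < m then ‖(c • v).2.1 j‖ ^ 2 else 0 := by
        rw [hv, Finset.mul_sum]
        refine Finset.sum_congr rfl fun j _ => ?_
        by_cases hj : (j : ℕ) < m
        · simp [hj, h2 j, norm_mul, mul_pow]
        · simp [hj]

lemma mem_Qbar_iff (v : V n) (hv : v ≠ 0) :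
    Projectivization.mk ℂ v hv ∈ Qbar n m ↔ v ∈ cone n m := by
  constructor
  · rintro ⟨ζ, z, w, h, heq, hsum⟩
    rw [Projectivization.mk_eq_mk_iff] at heq
    obtain ⟨a, ha⟩ := heq
    have : v = (a : ℂ) • (ζ, z, w) := ha.symm
    rw [this]
    exact cone_smul n m _ hsum
  · intro hc
    exact ⟨v.1, v.2.1, v.2.2, by simpa using hv, by simp, hc⟩

/-- The descended map. -/
noncomputable def f : ℙ ℂ (V n) → ℙ ℂ (V n) := fun p =>
  Projectivization.mk ℂ (Ft n m p.rep) (Ft_ne_zero n m p.rep_nonzero)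

lemma f_mk (v : V n) (hv : v ≠ 0) :
    f n m (Projectivization.mk ℂ v hv) = Projectivization.mk ℂ (Ft n m v) (Ft_ne_zero n m hv) := by
  obtain ⟨a, ha⟩ := Projectivization.exists_smul_eq_mk_rep ℂ v hv
  unfold f
  rw [Projectivization.mk_eq_mk_iff]
  refine ⟨a, ?_⟩
  have : (Projectivization.mk ℂ v hv).rep = (a : ℂ) • v := by
    rw [← ha]; rfl
  rw [this, Ft_smul n m _ (Units.ne_zero a)]
  rfl

lemma mk_Ft_eq_mk_Gt (v : V n) (hv : v ≠ 0) :
    Projectivization.mk ℂ (Ft n m v) (Ft_ne_zero n m hv)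
      = Projectivization.mk ℂ (Gt n m v) (Gt_ne_zero n m hv) := by
  rw [Projectivization.mk_eq_mk_iff']
  refine ⟨(ee n v)⁻¹, ?_⟩
  rw [Gt_eq_smul, smul_smul, inv_mul_cancel₀ (ee_ne_zero n v), one_smul]

lemma cone_bound {v : V n} (hv : v ∈ cone n m) :
    ‖v.2.2‖ ≤ ‖v.1‖ ∧ ∀ j : Fin n, (j : ℕ) < m → ‖v.2.1 j‖ ≤ ‖v.1‖ := by
  simp only [cone, Set.mem_setOf_eq] at hv
  have hsum_nonneg : ∀ j : Fin n, (0:ℝ) ≤ if (j : ℕ) < m then ‖v.2.1 j‖ ^ 2 else 0 := by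
    intro j; split <;> positivity
  have key : ‖v.1‖ ^ 2 = ‖v.2.2‖ ^ 2
      + ∑ j : Fin n, if (j : ℕ) < m then ‖v.2.1 j‖ ^ 2 else 0 := by
    rw [← hv]; ring
  constructor
  · have : ‖v.2.2‖ ^ 2 ≤ ‖v.1‖ ^ 2 := by
      rw [key]
      have hs : (0:ℝ) ≤ ∑ j : Fin n, if (j : ℕ) < m then ‖v.2.1 j‖ ^ 2 else 0 :=
        Finset.sum_nonneg fun j _ => hsum_nonneg j
      linarith
    exact (pow_le_pow_iff_left₀ (norm_nonneg _) (norm_nonneg _) (by norm_num)).1 this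
  · intro j hj
    have hle : ‖v.2.1 j‖ ^ 2 ≤ ∑ i : Fin n, if (i : ℕ) < m then ‖v.2.1 i‖ ^ 2 else 0 := by
      have := Finset.single_le_sum (fun i _ => hsum_nonneg i) (Finset.mem_univ j)
      simpa [hj] using this
    have : ‖v.2.1 j‖ ^ 2 ≤ ‖v.1‖ ^ 2 := by
      rw [key]; nlinarith [sq_nonneg ‖v.2.2‖]
    exact (pow_le_pow_iff_left₀ (norm_nonneg _) (norm_nonneg _) (by norm_num)).1 this

lemma ee_bound {v : V n} (hv : v ∈ cone n m) : ‖ee n v‖ ≤ Real.exp 1 := by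
  unfold ee
  split
  · have h1 : (1:ℝ) ≤ Real.exp 1 := by linarith [Real.add_one_le_exp (1:ℝ)]
    simpa using h1
  · rename_i h0
    rw [Complex.norm_exp]
    apply Real.exp_le_exp.2
    calc (-(v.2.2 / v.1)).re ≤ |(-(v.2.2 / v.1)).re| := le_abs_self _
      _ ≤ ‖-(v.2.2 / v.1)‖ := Complex.abs_re_le_norm _
      _ = ‖v.2.2‖ / ‖v.1‖ := by rw [norm_neg, norm_div]
      _ ≤ 1 := by
          rw [div_le_one (norm_pos_iff.mpr h0)]
          exact (cone_bound n m hv).1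

lemma continuousOn_Gt : ContinuousOn (Gt n m) (cone n m) := by
  intro v₀ hv₀
  by_cases h0 : v₀.1 = 0
  · -- boundary point: v₀ = (0, z₀, 0) with z₀ⱼ = 0 for j < m
    have hb := cone_bound n m hv₀
    have hw0 : v₀.2.2 = 0 := by
      have := hb.1; rw [h0] at this; simpa using norm_le_zero_iff.1 (by simpa using this)
    have hz0 : ∀ j : Fin n, (j : ℕ) < m → v₀.2.1 j = 0 := by
      intro j hj
      have := hb.2 j hj; rw [h0] at this
      exact norm_le_zero_iff.1 (by simpa using this)
    -- squeeze lemma: any function bounded by e * ‖v.1‖ tends to 0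
    have squeeze : ∀ g : V n → ℂ, (∀ v ∈ cone n m, ‖g v‖ ≤ Real.exp 1 * ‖v.1‖) →
        Filter.Tendsto g (nhdsWithin v₀ (cone n m)) (nhds 0) := by
      intro g hg
      rw [tendsto_zero_iff_norm_tendsto_zero]
      apply squeeze_zero' (Filter.eventually_of_mem self_mem_nhdsWithin
        (fun v hv => norm_nonneg _))
        (Filter.eventually_of_mem self_mem_nhdsWithin hg)
      have : Filter.Tendsto (fun v : V n => ‖v.1‖) (nhdsWithin v₀ (cone n m)) (nhds ‖v₀.1‖) :=
        ((continuous_norm.comp continuous_fst).continuousWithinAt)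
      rw [h0] at this
      simpa using (this.const_mul (Real.exp 1))
    have hGv₀ : Gt n m v₀ = v₀ := by
      unfold Gt ee
      rw [if_pos h0]
      refine Prod.ext (by simp [h0]) (Prod.ext ?_ (by simp))
      funext j
      by_cases hj : (j : ℕ) < m <;> simp [hj]
    unfold ContinuousWithinAt
    rw [hGv₀]
    have h1 : Filter.Tendsto (fun v => ee n v * v.1) (nhdsWithin v₀ (cone n m)) (nhds v₀.1) := by
      rw [h0]
      exact squeeze _ fun v hv => by
        rw [norm_mul]
        exact mul_le_mul_of_nonneg_right (ee_bound n m hv) (norm_nonneg _)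
    have h3 : Filter.Tendsto (fun v => ee n v * v.2.2) (nhdsWithin v₀ (cone n m))
        (nhds v₀.2.2) := by
      rw [hw0]
      exact squeeze _ fun v hv => by
        rw [norm_mul]
        exact mul_le_mul (ee_bound n m hv) (cone_bound n m hv).1 (norm_nonneg _)
          (Real.exp_nonneg 1)
    have h2 : Filter.Tendsto (fun v => (fun j => if (j : ℕ) < m then ee n v * v.2.1 j
        else v.2.1 j : Fin n → ℂ)) (nhdsWithin v₀ (cone n m)) (nhds v₀.2.1) := by
      rw [tendsto_pi_nhds]
      intro j
      by_cases hj : (j : ℕ) < m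
      · simp only [hj, if_true]
        rw [hz0 j hj]
        exact squeeze _ fun v hv => by
          rw [norm_mul]
          exact mul_le_mul (ee_bound n m hv) ((cone_bound n m hv).2 j hj) (norm_nonneg _)
            (Real.exp_nonneg 1)
      · simp only [hj, if_false]
        exact ((continuous_apply j).comp (continuous_fst.comp continuous_snd)).continuousWithinAt
    have H := h1.prodMk_nhds (h2.prodMk_nhds h3)
    exact H
  · -- interior point: ζ ≠ 0, everything is continuous nearby
    apply ContinuousAt.continuousWithinAt
    have hopen : IsOpen {v : V n | v.1 ≠ 0} := isOpen_compl_singleton.preimage continuous_fst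
    have hmem : {v : V n | v.1 ≠ 0} ∈ nhds v₀ := hopen.mem_nhds h0
    have hee : ContinuousAt (ee n) v₀ := by
      apply ContinuousAt.congr (f := fun v : V n => Complex.exp (-(v.2.2 / v.1)))
      · exact (Complex.continuous_exp.continuousAt).comp
          (((continuous_snd.comp continuous_snd).continuousAt.div
            continuous_fst.continuousAt h0).neg)
      · exact Filter.eventually_of_mem hmem fun v hv => (if_neg hv).symm
    unfold Gt
    apply ContinuousAt.prodMk
    · exact hee.mul continuous_fst.continuousAt
    apply ContinuousAt.prodMk
    · rw [continuousAt_pi]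
      intro j
      by_cases hj : (j : ℕ) < m
      · simp only [hj, if_true]
        exact hee.mul ((continuous_apply j).comp
          (continuous_fst.comp continuous_snd)).continuousAt
      · simp only [hj, if_false]
        exact ((continuous_apply j).comp (continuous_fst.comp continuous_snd)).continuousAt
    · exact hee.mul (continuous_snd.comp continuous_snd).continuousAt

/-- The quotient map onto projective space is continuous. -/
lemma continuous_mk' : Continuous (Projectivization.mk' ℂ : {v : V n // v ≠ 0} → ℙ ℂ (V n)) :=
  continuous_quotient_mk'

/-- The quotient map onto projective space is open. -/
lemma isOpenMap_mk' : IsOpenMap (Projectivization.mk' ℂ : {v : V n // v ≠ 0} → ℙ ℂ (V n)) := by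
  letI : Setoid {v : V n // v ≠ 0} := projectivizationSetoid ℂ (V n)
  intro U hU
  change @IsOpen (Quotient (projectivizationSetoid ℂ (V n))) instTopologicalSpaceQuotient
    (Projectivization.mk' ℂ '' U)
  rw [← (isQuotientMap_quotient_mk' (s := projectivizationSetoid ℂ (V n))).isOpen_preimage]
  have : (Quotient.mk' : {v : V n // v ≠ 0} → Quotient (projectivizationSetoid ℂ (V n)))
        ⁻¹' (Projectivization.mk' ℂ '' U)
      = ⋃ c : ℂˣ, (fun u : {v : V n // v ≠ 0} =>
          (⟨(c : ℂ) • u.1, smul_ne_zero (Units.ne_zero c) u.2⟩ : {v : V n // v ≠ 0})) ⁻¹' U := by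
    ext u
    simp only [Set.mem_preimage, Set.mem_image, Set.mem_iUnion]
    constructor
    · rintro ⟨x, hx, hxu⟩
      have hx' : Projectivization.mk ℂ x.1 x.2 = Projectivization.mk ℂ u.1 u.2 := by
        exact hxu
      rw [Projectivization.mk_eq_mk_iff] at hx'
      obtain ⟨c, hc⟩ := hx'
      refine ⟨c, ?_⟩
      have hx2 : (⟨(c : ℂ) • u.1, smul_ne_zero (Units.ne_zero c) u.2⟩ : {v : V n // v ≠ 0}) = x :=
        Subtype.ext (by rw [← hc]; rfl)
      rwa [hx2]
    · rintro ⟨c, hc⟩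
      refine ⟨_, hc, ?_⟩
      show Projectivization.mk ℂ ((c : ℂ) • u.1) _ = Quotient.mk' u
      have hq : (Quotient.mk' u : ℙ ℂ (V n)) = Projectivization.mk ℂ u.1 u.2 := rfl
      rw [hq, Projectivization.mk_eq_mk_iff]
      exact ⟨c, by rfl⟩
  rw [this]
  apply isOpen_iUnion
  intro c
  apply IsOpen.preimage _ hU
  exact (continuous_subtype_val.const_smul (c : ℂ)).subtype_mk _

lemma continuousOn_f : ContinuousOn (f n m) (Qbar n m) := by
  rw [continuousOn_iff_continuous_restrict]
  set π : {v : V n // v ≠ 0} → ℙ ℂ (V n) := Projectivization.mk' ℂ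
  have hπsurj : Function.Surjective π := by
    intro p
    exact ⟨⟨p.rep, p.rep_nonzero⟩, p.mk_rep⟩
  have hquot : Topology.IsQuotientMap ((Qbar n m).restrictPreimage π) :=
    IsOpenMap.isQuotientMap ((isOpenMap_mk' n).restrictPreimage _)
      ((continuous_mk' n).restrictPreimage)
      (hπsurj.restrictPreimage _)
  rw [hquot.continuous_iff]
  have hcone : ∀ u : ↥(π ⁻¹' Qbar n m), (u.1.1 : V n) ∈ cone n m := by
    rintro ⟨⟨v, hv⟩, hmem⟩
    have : Projectivization.mk ℂ v hv ∈ Qbar n m := hmem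
    exact (mem_Qbar_iff n m v hv).1 this
  have key : ((Qbar n m).restrict (f n m)) ∘ ((Qbar n m).restrictPreimage π)
      = fun u : ↥(π ⁻¹' Qbar n m) =>
          Projectivization.mk ℂ (Gt n m u.1.1) (Gt_ne_zero n m u.1.2) := by
    funext u
    show f n m (π u.1) = _
    have hu : π u.1 = Projectivization.mk ℂ u.1.1 u.1.2 := rfl
    rw [hu, f_mk n m u.1.1 u.1.2, mk_Ft_eq_mk_Gt n m u.1.1 u.1.2]
  rw [show (Qbar n m).domRestrict (f n m) = (Qbar n m).restrict (f n m) from rfl, key]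
  have hcont : Continuous (fun u : ↥(π ⁻¹' Qbar n m) => Gt n m u.1.1) :=
    (continuousOn_Gt n m).comp_continuous
      (continuous_subtype_val.comp continuous_subtype_val) hcone
  exact (continuous_mk' n).comp (hcont.subtype_mk _)

end Stmt7Aux

/-- the map `f : 𝒬̄ → 𝒬̄` fixing `𝒮 = 𝒬̄ ∩ {ζ = 0}` pointwise and equal to
`F(z,w) = (z_1,…,z_m,e^wz_{m+1},…,e^wz_n,w)` on the affine part `𝒬` is continuous on all
of `𝒬̄`. -/
theorem stmt7 (n m : ℕ) (hm : m < n) :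
    ∃ f : ℙ ℂ (ℂ × (Fin n → ℂ) × ℂ) → ℙ ℂ (ℂ × (Fin n → ℂ) × ℂ),
      Set.MapsTo f (Qbar n m) (Qbar n m) ∧
      ContinuousOn f (Qbar n m) ∧
      (∀ p ∈ Sset n m, f p = p) ∧
      ∀ (z : Fin n → ℂ) (w : ℂ),
        (∑ j : Fin n, if (j : ℕ) < m then ‖z j‖ ^ 2 else 0) + ‖w‖ ^ 2 = 1 →
        f (Projectivization.mk ℂ ((1 : ℂ), z, w) (by simp))
          = Projectivization.mk ℂ
              ((1 : ℂ), (Fmap n m (z, w)).1, (Fmap n m (z, w)).2) (by simp) := by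
  refine ⟨Stmt7Aux.f n m, ?_, Stmt7Aux.continuousOn_f n m, ?_, ?_⟩
  · -- MapsTo
    intro p hp
    induction p using Projectivization.ind with
    | h v hv =>
      rw [Stmt7Aux.f_mk, Stmt7Aux.mem_Qbar_iff]
      have hc : v ∈ Stmt7Aux.cone n m := (Stmt7Aux.mem_Qbar_iff n m v hv).1 hp
      simp only [Stmt7Aux.cone, Set.mem_setOf_eq, Stmt7Aux.Ft] at hc ⊢
      rw [hc]
      refine Finset.sum_congr rfl fun j _ => ?_
      by_cases hj : (j : ℕ) < m <;> simp [hj]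
  · -- fixes S
    rintro p ⟨-, z, w, h, rfl⟩
    rw [Stmt7Aux.f_mk]
    have hFt : Stmt7Aux.Ft n m ((0 : ℂ), z, w) = ((0 : ℂ), z, w) := by
      unfold Stmt7Aux.Ft
      refine Prod.ext rfl (Prod.ext ?_ rfl)
      funext j
      by_cases hj : (j : ℕ) < m <;> simp [hj]
    exact (Projectivization.mk_eq_mk_iff' ℂ _ _ _ _).2 ⟨1, by rw [one_smul, hFt]⟩
  · -- formula on the affine part
    intro z w _
    rw [Stmt7Aux.f_mk]
    have hFt : Stmt7Aux.Ft n m ((1 : ℂ), z, w)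
        = ((1 : ℂ), (Fmap n m (z, w)).1, (Fmap n m (z, w)).2) := by
      unfold Stmt7Aux.Ft Fmap
      refine Prod.ext rfl (Prod.ext ?_ rfl)
      funext j
      by_cases hj : (j : ℕ) < m <;> simp [hj]
    exact (Projectivization.mk_eq_mk_iff' ℂ _ _ _ _).2 ⟨1, by rw [one_smul, hFt]⟩
end
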